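/- The composition of the partial Möbius operators over all n coordinates equals the full Möbius transform: for every Boolean function f : 𝔽₂ⁿ → 𝔽₂, (μ_1 ∘ μ_2 ∘ ⋯ ∘ μ_n)(f) = μ(f), where μ(f)(u) = ∑_{v ≼ u} f(v). -/

import Mathlib

/-- The partial Möbius operator `μ_i`. -/
def partialMobius {n : ℕ} (i : Fin n) (f : (Fin n → ZMod 2) → ZMod 2) :
    (Fin n → ZMod 2) → ZMod 2 :=
  fun u => if u i = 0 then f u else f (Function.update u i 0) + f u

/-- The full Möbius transform: `μ(f)(u) = ∑_{v ≼ u} f(v)` in `𝔽₂`. -/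
def mobius {n : ℕ} (f : (Fin n → ZMod 2) → ZMod 2) : (Fin n → ZMod 2) → ZMod 2 :=
  fun u => ∑ v : Fin n → ZMod 2, if ∀ i, (v i).val ≤ (u i).val then f v else 0

lemma zmod2_eq_zero_or_one (x : ZMod 2) : x = 0 ∨ x = 1 := by revert x; decide

lemma zmod2_val_le_of_one {x y : ZMod 2} (h : y = 1) : x.val ≤ y.val := by
  subst h; revert x; decide

lemma zmod2_eq_of_val_le_zero {x y : ZMod 2} (h : x.val ≤ y.val) (h2 : y = 0) : x = y := by
  subst h2; revert h; revert x; decide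

lemma zmod2_val_le_of_eq {x y : ZMod 2} (h : x = y) : x.val ≤ y.val := by subst h; exact le_refl _

/-- Generalized statement for a nodup list of coordinates. -/
lemma foldr_partialMobius_aux {n : ℕ} (l : List (Fin n)) (hl : l.Nodup)
    (f : (Fin n → ZMod 2) → ZMod 2) (u : Fin n → ZMod 2) :
    (l.foldr partialMobius f) u =
      ∑ v : Fin n → ZMod 2,
        if ∀ i, (i ∈ l → (v i).val ≤ (u i).val) ∧ (i ∉ l → v i = u i) then f v else 0 := by
  induction l generalizing f u with
  | nil =>
      simp only [List.foldr_nil, List.not_mem_nil, false_implies, true_and, not_false_iff,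
        forall_const, ← funext_iff]
      rw [Finset.sum_ite_eq' Finset.univ u f]
      simp
  | cons a l ih =>
      have ha : a ∉ l := (List.nodup_cons.mp hl).1
      have hl' : l.Nodup := (List.nodup_cons.mp hl).2
      show partialMobius a (l.foldr partialMobius f) u = _
      rw [partialMobius]
      rcases zmod2_eq_zero_or_one (u a) with h0 | h0
      · rw [if_pos h0, ih hl' f u]
        apply Finset.sum_congr rfl
        intro v _
        apply if_congr _ rfl rfl
        constructor
        · intro h i
          obtain ⟨h1, h2⟩ := h i
          constructor
          · intro hi
            rcases List.mem_cons.mp hi with rfl | hi'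
            · exact zmod2_val_le_of_eq (h2 ha)
            · exact h1 hi'
          · intro hi
            exact h2 (fun hi' => hi (List.mem_cons_of_mem a hi'))
        · intro h i
          obtain ⟨h1, h2⟩ := h i
          constructor
          · intro hi
            exact h1 (List.mem_cons_of_mem a hi)
          · intro hi
            by_cases hia : i = a
            · subst hia
              exact zmod2_eq_of_val_le_zero (h1 ((List.mem_cons_self : i ∈ i :: l))) h0
            · exact h2 (by simp [hia, hi])
      · rw [if_neg (by simp [h0]), ih hl' f (Function.update u a 0), ih hl' f u,
          ← Finset.sum_add_distrib]
        apply Finset.sum_congr rfl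
        intro v _
        rcases zmod2_eq_zero_or_one (v a) with hva | hva
        · have hB : ¬ ∀ i, (i ∈ l → (v i).val ≤ (u i).val) ∧ (i ∉ l → v i = u i) := by
            intro h
            have := (h a).2 ha
            rw [hva, h0] at this
            exact (by decide : (0 : ZMod 2) ≠ 1) this
          rw [if_neg hB, add_zero]
          apply if_congr _ rfl rfl
          constructor
          · intro h i
            obtain ⟨h1, h2⟩ := h i
            constructor
            · intro hi
              rcases List.mem_cons.mp hi with rfl | hi'
              · rw [hva]; exact Nat.zero_le _
              · have hia : i ≠ a := fun he => ha (he ▸ hi')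
                have := h1 hi'
                rwa [Function.update_of_ne hia] at this
            · intro hi
              have hia : i ≠ a := fun he => hi (he ▸ (List.mem_cons_self : a ∈ a :: l))
              have := h2 (fun hi' => hi (List.mem_cons_of_mem a hi'))
              rwa [Function.update_of_ne hia] at this
          · intro h i
            obtain ⟨h1, h2⟩ := h i
            constructor
            · intro hi
              have hia : i ≠ a := fun he => ha (he ▸ hi)
              rw [Function.update_of_ne hia]
              exact h1 (List.mem_cons_of_mem a hi)
            · intro hi
              by_cases hia : i = a
              · subst hia
                rw [hva, Function.update_self]
              · rw [Function.update_of_ne hia]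
                exact h2 (by simp [hia, hi])
        · have hB : ¬ ∀ i, (i ∈ l → (v i).val ≤ ((Function.update u a 0) i).val) ∧
              (i ∉ l → v i = (Function.update u a 0) i) := by
            intro h
            have := (h a).2 ha
            rw [hva, Function.update_self] at this
            exact (by decide : (1 : ZMod 2) ≠ 0) this
          rw [if_neg hB, zero_add]
          apply if_congr _ rfl rfl
          constructor
          · intro h i
            obtain ⟨h1, h2⟩ := h i
            constructor
            · intro hi
              rcases List.mem_cons.mp hi with rfl | hi'
              · exact zmod2_val_le_of_one h0
              · exact h1 hi'
            · intro hi
              exact h2 (fun hi' => hi (List.mem_cons_of_mem a hi'))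
          · intro h i
            obtain ⟨h1, h2⟩ := h i
            constructor
            · intro hi
              exact h1 (List.mem_cons_of_mem a hi)
            · intro hi
              by_cases hia : i = a
              · subst hia
                rw [hva, h0]
              · exact h2 (by simp [hia, hi])

/-- the composition of the partial Möbius operators over all `n`
coordinates, `μ_1 ∘ μ_2 ∘ ⋯ ∘ μ_n`, equals the full Möbius transform. -/
theorem foldr_partialMobius_eq_mobius {n : ℕ} (f : (Fin n → ZMod 2) → ZMod 2) :
    (List.finRange n).foldr partialMobius f = mobius f := by
  funext u
  rw [foldr_partialMobius_aux (List.finRange n) (List.nodup_finRange n) f u, mobius]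
  apply Finset.sum_congr rfl
  intro v _
  apply if_congr _ rfl rfl
  simp [List.mem_finRange]
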